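/- Let h, k > 0 and u, v ∈ Σ^{k+h+2} with u_1^h = v_1^h and u_{h+1} ≠ v_{h+1}. Then the maximal distance along the adding-machine orbits, ρ_∞(u,v) = sup_{n≥0} ρ(u⊕n, v⊕n), equals ρ(0^{k+h+2}, 0^h 1 1 w) for the unique (mod 2^{k+h+2}) iterate n at which one of u⊕n, v⊕n equals 0^{k+h+2} and the other equals 0^h 1 1 w for some w ∈ Σ^k. -/

import Mathlib

noncomputable def kfin (α : ℝ) {k : ℕ} (u : Fin k → Bool) : ℝ :=
  (1 - α) * ∑ i : Fin k, (if u i then α ^ (i : ℕ) else 0)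

/-- `ρ(u,v) = (1-α)|Σ (u_i - v_i)α^{i-1}|` for words of equal length. -/
noncomputable def rhoW (α : ℝ) {k : ℕ} (u v : Fin k → Bool) : ℝ := |kfin α u - kfin α v|

/-- The adding machine on `Σ^k` (add `1` with carry propagating rightward, cyclic). -/
def odoF {k : ℕ} (u : Fin k → Bool) : Fin k → Bool :=
  fun n => if ∀ i < n, u i = true then !u n else u n

/-- `ρ_∞(u,v) = max_n ρ(u⊕n, v⊕n)`. -/
noncomputable def rhoInfW (α : ℝ) {k : ℕ} (u v : Fin k → Bool) : ℝ :=
  ⨆ n : ℕ, rhoW α (odoF^[n] u) (odoF^[n] v)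

/-- The word `0^h 1 1 w` of length `k + h + 2` (0-based indexing). -/
def patW (h k : ℕ) (w : Fin k → Bool) : Fin (k + h + 2) → Bool :=
  fun i =>
    if (i : ℕ) < h then false
    else if h2 : (i : ℕ) < h + 2 then true
    else w ⟨(i : ℕ) - h - 2, by have := i.isLt; omega⟩

namespace S11

def tl {m : ℕ} (u : Fin (m+1) → Bool) : Fin m → Bool := fun i => u i.succ

def toN : {m : ℕ} → (Fin m → Bool) → ℕ
  | 0, _ => 0
  | _+1, u => (u 0).toNat + 2 * toN (tl u)

lemma toN_succ {m : ℕ} (u : Fin (m+1) → Bool) : toN u = (u 0).toNat + 2 * toN (tl u) := rfl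

lemma toN_lt : ∀ {m : ℕ} (u : Fin m → Bool), toN u < 2^m := by
  intro m
  induction m with
  | zero => intro u; simp [toN]
  | succ m ih =>
    intro u
    have := ih (tl u)
    have hb : (u 0).toNat ≤ 1 := Bool.toNat_le (u 0)
    simp only [toN, pow_succ]
    omega

lemma odoF_zero {m : ℕ} (u : Fin (m+1) → Bool) : odoF u 0 = !u 0 := by
  have hcond : ∀ i < (0 : Fin (m+1)), u i = true := by
    intro i hi
    exact absurd hi (by simp [Fin.lt_def])
  simp only [odoF]
  rw [if_pos hcond]

lemma tl_odoF_true {m : ℕ} (u : Fin (m+1) → Bool) (h0 : u 0 = true) :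
    tl (odoF u) = odoF (tl u) := by
  funext i
  simp only [tl, odoF]
  have hiff : (∀ j < i.succ, u j = true) ↔ (∀ j < i, u j.succ = true) := by
    constructor
    · intro hp j hj
      exact hp j.succ (Fin.succ_lt_succ_iff.mpr hj)
    · intro hp j hj
      rcases Fin.eq_zero_or_eq_succ j with rfl | ⟨j', rfl⟩
      · exact h0
      · exact hp j' (Fin.succ_lt_succ_iff.mp hj)
  by_cases hc : ∀ j < i, u j.succ = true
  · rw [if_pos (hiff.mpr hc)]; exact (if_pos hc).symm
  · rw [if_neg (fun hp => hc (hiff.mp hp))]; exact (if_neg hc).symm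

lemma tl_odoF_false {m : ℕ} (u : Fin (m+1) → Bool) (h0 : u 0 = false) :
    tl (odoF u) = tl u := by
  funext i
  simp only [tl, odoF]
  rw [if_neg]
  intro hp
  have := hp 0 (by simp [Fin.lt_def])
  rw [h0] at this; exact Bool.false_ne_true this

lemma toN_odoF : ∀ {m : ℕ} (u : Fin m → Bool), toN (odoF u) = (toN u + 1) % 2^m := by
  intro m
  induction m with
  | zero => intro u; simp [toN]
  | succ m ih =>
    intro u
    cases h0 : u 0 with
    | false =>
      have h1 : toN (odoF u) = 1 + 2 * toN (tl u) := by
        simp [toN, tl_odoF_false u h0, odoF_zero, h0]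
      have h2 : toN u = 2 * toN (tl u) := by simp [toN, h0]
      have := toN_lt (tl u)
      rw [h1, h2, Nat.mod_eq_of_lt (by rw [pow_succ]; omega)]
      omega
    | true =>
      have h1 : toN (odoF u) = 2 * toN (odoF (tl u)) := by
        simp [toN, tl_odoF_true u h0, odoF_zero, h0]
      have h2 : toN u = 1 + 2 * toN (tl u) := by simp [toN, h0]
      rw [h1, ih (tl u), h2, pow_succ, mul_comm (2^m) 2]
      rw [show 1 + 2 * toN (tl u) + 1 = 2 * (toN (tl u) + 1) by ring]
      rw [Nat.mul_mod_mul_left]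

lemma toN_iter {m : ℕ} (u : Fin m → Bool) (n : ℕ) :
    toN (odoF^[n] u) = (toN u + n) % 2^m := by
  induction n with
  | zero => simp [Nat.mod_eq_of_lt (toN_lt u)]
  | succ n ih =>
    rw [Function.iterate_succ_apply', toN_odoF, ih, Nat.mod_add_mod, Nat.add_assoc]

lemma testBit_toN : ∀ {m : ℕ} (u : Fin m → Bool) (i : Fin m), (toN u).testBit (i : ℕ) = u i := by
  intro m
  induction m with
  | zero => intro u i; exact absurd i.isLt (by omega)
  | succ m ih =>
    intro u i
    have hb : (u 0).toNat ≤ 1 := Bool.toNat_le (u 0)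
    rcases Fin.eq_zero_or_eq_succ i with rfl | ⟨j, rfl⟩
    · show (toN u).testBit 0 = u 0
      rw [Nat.testBit_zero]
      have : toN u % 2 = (u 0).toNat := by simp only [toN]; omega
      rw [this]
      cases u 0 <;> simp
    · have hv : ((j.succ : Fin (m+1)) : ℕ) = (j : ℕ) + 1 := rfl
      rw [hv, show (j:ℕ)+1 = Nat.succ j from rfl, Nat.testBit_succ]
      have : toN u / 2 = toN (tl u) := by simp only [toN]; omega
      rw [this, ih (tl u) j]
      rfl

lemma toN_inj {m : ℕ} {u v : Fin m → Bool} (h : toN u = toN v) : u = v := by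
  funext i
  rw [← testBit_toN u i, ← testBit_toN v i, h]

lemma toN_false {m : ℕ} : toN (fun _ : Fin m => false) = 0 := by
  induction m with
  | zero => rfl
  | succ m ih =>
    simp only [toN]
    rw [show tl (fun _ : Fin (m+1) => false) = (fun _ : Fin m => false) from rfl, ih]
    simp

lemma toN_fromN : ∀ (m x : ℕ), toN (fun i : Fin m => x.testBit (i : ℕ)) = x % 2^m := by
  intro m
  induction m with
  | zero => intro x; simp [toN, Nat.mod_one]
  | succ m ih =>
    intro x
    have htl : tl (fun i : Fin (m+1) => x.testBit (i : ℕ)) =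
        (fun i : Fin m => (x/2).testBit (i : ℕ)) := by
      funext i
      show x.testBit ((i.succ : Fin (m+1)) : ℕ) = (x/2).testBit (i : ℕ)
      rw [show ((i.succ : Fin (m+1)) : ℕ) = Nat.succ (i : ℕ) from rfl, Nat.testBit_succ]
    rw [toN_succ, htl, ih]
    have h0 : (x.testBit ((0 : Fin (m+1)) : ℕ)).toNat = x % 2 := by
      rw [show ((0 : Fin (m+1)) : ℕ) = 0 from rfl, Nat.testBit_zero]
      rcases Nat.mod_two_eq_zero_or_one x with hx | hx <;> simp [hx]
    rw [h0, pow_succ, mul_comm (2^m) 2, Nat.mod_mul]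

noncomputable def phi (α : ℝ) : ℕ → ℕ → ℝ
  | 0, _ => 0
  | m+1, x => (if x % 2 = 1 then 1 else 0) + α * phi α m (x / 2)

lemma phi_nonneg {α : ℝ} (hα : 0 ≤ α) : ∀ m x, 0 ≤ phi α m x := by
  intro m
  induction m with
  | zero => intro x; simp [phi]
  | succ m ih =>
    intro x
    have := ih (x/2)
    have : 0 ≤ α * phi α m (x/2) := mul_nonneg hα this
    simp only [phi]
    split <;> linarith

lemma phi_le_two {α : ℝ} (hα : 0 ≤ α) (hα2 : α ≤ 1/2) : ∀ m x, phi α m x ≤ 2 := by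
  intro m
  induction m with
  | zero => intro x; simp [phi]
  | succ m ih =>
    intro x
    have h1 := ih (x/2)
    have h2 := phi_nonneg hα m (x/2)
    have : α * phi α m (x/2) ≤ 1 := by nlinarith
    simp only [phi]
    split <;> linarith

lemma phi_zero (α : ℝ) : ∀ m, phi α m 0 = 0 := by
  intro m; induction m with
  | zero => rfl
  | succ m ih => simp [phi, ih]

lemma phi_mod (α : ℝ) : ∀ m x, phi α m (x % 2^m) = phi α m x := by
  intro m
  induction m with
  | zero => intro x; simp [phi]
  | succ m ih =>
    intro x
    have h1 : (x % 2^(m+1)) % 2 = x % 2 :=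
      Nat.mod_mod_of_dvd x ⟨2^m, by rw [pow_succ, mul_comm]⟩
    have h2 : (x % 2^(m+1)) / 2 = (x / 2) % 2^m := by
      rw [pow_succ, mul_comm]; exact Nat.mod_mul_right_div_self x 2 (2^m)
    simp only [phi, h1, h2, ih]

lemma phi_subadd {α : ℝ} (hα : 0 ≤ α) (hα2 : α ≤ 1/2) :
    ∀ m A D, phi α m ((A + D) % 2^m) ≤ phi α m A + phi α m D := by
  intro m
  induction m with
  | zero => intro A D; simp [phi]
  | succ m ih =>
    intro A D
    have h1 : ((A+D) % 2^(m+1)) % 2 = (A+D) % 2 :=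
      Nat.mod_mod_of_dvd _ ⟨2^m, by rw [pow_succ, mul_comm]⟩
    have h2 : ((A+D) % 2^(m+1)) / 2 = ((A+D) / 2) % 2^m := by
      rw [pow_succ, mul_comm]; exact Nat.mod_mul_right_div_self _ 2 (2^m)
    simp only [phi, h1, h2]
    rcases Nat.mod_two_eq_zero_or_one A with ha | ha <;>
      rcases Nat.mod_two_eq_zero_or_one D with hd | hd
    · have e1 : (A+D) % 2 = 0 := by omega
      have e2 : (A+D)/2 = A/2 + D/2 := by omega
      rw [e1, e2]
      have := ih (A/2) (D/2)
      have hm : α * phi α m ((A/2 + D/2) % 2^m) ≤ α * (phi α m (A/2) + phi α m (D/2)) :=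
        mul_le_mul_of_nonneg_left this hα
      simp only [ha, hd]
      norm_num
      linarith [hm]
    · have e1 : (A+D) % 2 = 1 := by omega
      have e2 : (A+D)/2 = A/2 + D/2 := by omega
      rw [e1, e2]
      have := ih (A/2) (D/2)
      have hm : α * phi α m ((A/2 + D/2) % 2^m) ≤ α * (phi α m (A/2) + phi α m (D/2)) :=
        mul_le_mul_of_nonneg_left this hα
      simp only [ha, hd]
      norm_num
      linarith [hm]
    · have e1 : (A+D) % 2 = 1 := by omega
      have e2 : (A+D)/2 = A/2 + D/2 := by omega
      rw [e1, e2]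
      have := ih (A/2) (D/2)
      have hm : α * phi α m ((A/2 + D/2) % 2^m) ≤ α * (phi α m (A/2) + phi α m (D/2)) :=
        mul_le_mul_of_nonneg_left this hα
      simp only [ha, hd]
      norm_num
      linarith [hm]
    · have e1 : (A+D) % 2 = 0 := by omega
      rw [e1]
      have hb := phi_le_two hα hα2 m (((A+D)/2) % 2^m)
      have h3 : α * phi α m (((A+D)/2) % 2^m) ≤ 1 := by
        nlinarith [phi_nonneg hα m (((A+D)/2) % 2^m)]
      have p1 := phi_nonneg hα m (A/2)
      have p2 := phi_nonneg hα m (D/2)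
      simp only [ha, hd]
      norm_num
      nlinarith

lemma phi_shift (α : ℝ) : ∀ j r x, phi α (j + r) x = phi α j x + α^j * phi α r (x / 2^j) := by
  intro j
  induction j with
  | zero => intro r x; simp [phi]
  | succ j ih =>
    intro r x
    have e : j + 1 + r = (j + r) + 1 := by omega
    rw [e]
    simp only [phi]
    rw [ih r (x/2)]
    have : x / 2 / 2^j = x / 2^(j+1) := by
      rw [Nat.div_div_eq_div_mul, pow_succ, mul_comm]
    rw [this]
    ring

lemma kfin_phi (α : ℝ) : ∀ {m : ℕ} (u : Fin m → Bool),
    (∑ i : Fin m, (if u i then α ^ (i : ℕ) else 0)) = phi α m (toN u) := by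
  intro m
  induction m with
  | zero => intro u; simp [phi]
  | succ m ih =>
    intro u
    have hb : (u 0).toNat ≤ 1 := Bool.toNat_le (u 0)
    have e1 : toN u % 2 = (u 0).toNat := by simp only [toN]; omega
    have e2 : toN u / 2 = toN (tl u) := by simp only [toN]; omega
    rw [Fin.sum_univ_succ]
    simp only [phi, e1, e2, ← ih (tl u)]
    have : ∑ i : Fin m, (if u i.succ then α ^ ((i.succ : Fin (m+1)) : ℕ) else 0)
        = α * ∑ i : Fin m, (if tl u i then α ^ (i : ℕ) else 0) := by
      rw [Finset.mul_sum]
      apply Finset.sum_congr rfl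
      intro i _
      simp only [tl, Fin.val_succ]
      split <;> simp_all <;> ring
    rw [this]
    cases u 0 <;> simp

lemma tl_patW (h k : ℕ) (w : Fin k → Bool) : tl (patW (h+1) k w) = patW h k w := by
  funext i
  simp only [tl, patW, Fin.val_succ]
  by_cases c1 : (i:ℕ) < h
  · rw [if_pos (by omega), if_pos c1]
  · rw [if_neg (by omega), if_neg c1]
    by_cases c2 : (i:ℕ) < h + 2
    · rw [dif_pos (by omega), dif_pos c2]
    · rw [dif_neg (by omega), dif_neg c2]
      exact congrArg w (by simp only [Fin.mk.injEq]; omega)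

lemma toN_patW (h k : ℕ) (w : Fin k → Bool) :
    toN (patW h k w) = 2^h * (3 + 4 * toN w) := by
  induction h with
  | zero =>
    have e0 : patW 0 k w 0 = true := by simp [patW]
    have e1 : tl (patW 0 k w) 0 = true := by simp [tl, patW]
    have e2 : tl (tl (patW 0 k w)) = w := by
      funext i
      simp only [tl, patW, Fin.val_succ]
      rw [if_neg (by omega), dif_neg (by omega)]
      refine congrArg w (Fin.ext ?_)
      show (i:ℕ) + 1 + 1 - 0 - 2 = (i:ℕ)
      omega
    rw [toN_succ, toN_succ (tl _), e0, e1, e2]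
    simp
    ring
  | succ h ih =>
    have e0 : patW (h+1) k w 0 = false := by simp [patW]
    rw [toN_succ, tl_patW, ih, e0]
    simp [pow_succ]
    ring

lemma kfin_eq (α : ℝ) {m : ℕ} (u : Fin m → Bool) :
    kfin α u = (1 - α) * phi α m (toN u) := by
  rw [kfin, kfin_phi]

lemma modcancel {P r d a : ℕ} (hr : r < P) (hd : d < P) (h : (r + a) % P = (d + a) % P) : r = d := by
  have h1 : r % P = d % P := Nat.ModEq.add_right_cancel' a h
  rwa [Nat.mod_eq_of_lt hr, Nat.mod_eq_of_lt hd] at h1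

lemma dvd_bound_eq {D a : ℕ} (hD : 0 < D) (h : a % D = 0) (h1 : 0 < a) (h2 : a < 2*D) : a = D := by
  obtain ⟨q, hq⟩ := Nat.dvd_of_mod_eq_zero h
  have hq0 : q ≠ 0 := by rintro rfl; omega
  have hq2 : q < 2 := by
    by_contra hcon
    push_neg at hcon
    have : D * 2 ≤ D * q := Nat.mul_le_mul_left D hcon
    omega
  have hq1 : q = 1 := by omega
  rw [hq1] at hq
  omega

lemma add_mod_helper {M : ℕ} (x y n c : ℕ) (hcd : c % M = (y + (M - x)) % M) (hx : x ≤ M) :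
    ((x + n) % M + c) % M = (y + n) % M := by
  rw [Nat.mod_add_mod]
  have h1 : (x + n + c) % M = (x + n + (y + (M - x))) % M := by
    rw [Nat.add_mod (x+n) c, hcd, ← Nat.add_mod]
  rw [h1]
  have h2 : x + n + (y + (M - x)) = (y + n) + M := by omega
  rw [h2, Nat.add_mod_right]

lemma phi_lower {α : ℝ} (hα : 0 ≤ α) (h k c : ℕ) (hc : c % 2^(h+2) = 3 * 2^h) :
    α^h * (1 + α) ≤ phi α (k+h+2) c := by
  have hm : k + h + 2 = h + (k+2) := by omega
  rw [hm, phi_shift]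
  have hdvd : (2:ℕ)^h ∣ 2^(h+2) := pow_dvd_pow 2 (by omega)
  have hch : c % 2^h = 0 := by
    rw [← Nat.mod_mod_of_dvd c hdvd, hc]
    exact Nat.mul_mod_left 3 (2^h)
  have h0 : phi α h c = 0 := by rw [← phi_mod, hch, phi_zero]
  have h4 : (2:ℕ)^(h+2) = 2^h * 4 := by rw [pow_add]; norm_num
  have he : (c / 2^h) % 4 = 3 := by
    rw [← Nat.mod_mul_right_div_self c (2^h) 4, ← h4, hc]
    exact Nat.mul_div_cancel 3 (by positivity)
  have e2 : (c / 2^h) % 2 = 1 := by omega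
  have e22 : ((c / 2^h) / 2) % 2 = 1 := by omega
  have hunfold : phi α (k+2) (c / 2^h)
      = 1 + α * (1 + α * phi α k (c / 2^h / 2 / 2)) := by
    show phi α (k+1+1) (c / 2^h) = _
    simp only [phi, e2, e22]
    norm_num
  rw [h0, hunfold]
  have hp := phi_nonneg hα k (c / 2^h / 2 / 2)
  have hpow : (0:ℝ) ≤ α^h := pow_nonneg hα h
  have inner : 1 + α ≤ 1 + α * (1 + α * phi α k (c / 2^h / 2 / 2)) := by
    nlinarith [mul_nonneg (mul_nonneg hα hα) hp]
  have := mul_le_mul_of_nonneg_left inner hpow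
  linarith

lemma phi_upper {α : ℝ} (hα : 0 ≤ α) (hα2 : α ≤ 1/2) (h k c : ℕ) (hc : c % 2^(h+2) = 2^h) :
    phi α (k+h+2) c ≤ α^h * (1 + α) := by
  have hm : k + h + 2 = h + (k+2) := by omega
  rw [hm, phi_shift]
  have hdvd : (2:ℕ)^h ∣ 2^(h+2) := pow_dvd_pow 2 (by omega)
  have hch : c % 2^h = 0 := by
    rw [← Nat.mod_mod_of_dvd c hdvd, hc, Nat.mod_self]
  have h0 : phi α h c = 0 := by rw [← phi_mod, hch, phi_zero]
  have h4 : (2:ℕ)^(h+2) = 2^h * 4 := by rw [pow_add]; norm_num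
  have he : (c / 2^h) % 4 = 1 := by
    rw [← Nat.mod_mul_right_div_self c (2^h) 4, ← h4, hc]
    exact Nat.div_self (by positivity)
  have e2 : (c / 2^h) % 2 = 1 := by omega
  have e22 : ((c / 2^h) / 2) % 2 = 0 := by omega
  have hunfold : phi α (k+2) (c / 2^h)
      = 1 + α * (0 + α * phi α k (c / 2^h / 2 / 2)) := by
    show phi α (k+1+1) (c / 2^h) = _
    simp only [phi, e2, e22]
    norm_num
  rw [h0, hunfold]
  have hp := phi_nonneg hα k (c / 2^h / 2 / 2)
  have hp2 := phi_le_two hα hα2 k (c / 2^h / 2 / 2)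
  have hpow : (0:ℝ) ≤ α^h := pow_nonneg hα h
  have k1 : α * α * phi α k (c / 2^h / 2 / 2) ≤ α * α * 2 :=
    mul_le_mul_of_nonneg_left hp2 (mul_nonneg hα hα)
  have k2 : α * α * 2 ≤ α := by nlinarith
  have inner : 1 + α * (0 + α * phi α k (c / 2^h / 2 / 2)) ≤ 1 + α := by nlinarith [k1, k2]
  have := mul_le_mul_of_nonneg_left inner hpow
  linarith

lemma aux (α : ℝ) (hα1 : 0 < α) (hα2 : α < 1 / 2) (h k : ℕ) (hh : 0 < h) (hk : 0 < k)
    (u v : Fin (k + h + 2) → Bool)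
    (hc : ((toN v + (2 ^ (k + h + 2) - toN u)) % 2 ^ (k + h + 2)) % 2 ^ (h + 2) = 3 * 2 ^ h) :
    ∃ n < 2 ^ (k + h + 2), ∃ w : Fin k → Bool,
      ((odoF^[n] u = (fun _ => false) ∧ odoF^[n] v = patW h k w) ∨
        (odoF^[n] v = (fun _ => false) ∧ odoF^[n] u = patW h k w)) ∧
      rhoInfW α u v = rhoW α (fun _ => false) (patW h k w) ∧
      ∀ n' < 2 ^ (k + h + 2), ∀ w' : Fin k → Bool,
        ((odoF^[n'] u = (fun _ => false) ∧ odoF^[n'] v = patW h k w') ∨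
          (odoF^[n'] v = (fun _ => false) ∧ odoF^[n'] u = patW h k w')) → n' = n := by
  have hα0 : (0:ℝ) ≤ α := le_of_lt hα1
  have hαh : α ≤ 1/2 := le_of_lt hα2
  set M := 2 ^ (k + h + 2) with hMdef
  have hMpos : 0 < M := by rw [hMdef]; positivity
  have htpos : (0:ℕ) < 2^h := by positivity
  have h42pos : (0:ℕ) < 2^(h+2) := by positivity
  have h42 : (2:ℕ)^(h+2) = 4 * 2^h := by rw [pow_add]; ring
  have hdvd : (2:ℕ)^(h+2) ∣ M := by rw [hMdef]; exact pow_dvd_pow 2 (by omega)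
  have hx : toN u < M := by rw [hMdef]; exact toN_lt u
  have hy : toN v < M := by rw [hMdef]; exact toN_lt v
  set c : ℕ := (toN v + (M - toN u)) % M with hcdef
  set c' : ℕ := (toN u + (M - toN v)) % M with hc'def
  have hcM : c < M := Nat.mod_lt _ hMpos
  have hc'M : c' < M := Nat.mod_lt _ hMpos
  have hcpos : 0 < c := by
    rcases Nat.eq_zero_or_pos c with h0 | h0
    · rw [h0, Nat.zero_mod] at hc; omega
    · exact h0
  have hMmod : M % 2^(h+2) = 0 := by
    obtain ⟨Q, hQ⟩ := hdvd
    rw [hQ]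
    exact Nat.mul_mod_right _ _
  have hsum : c + c' = M := by
    have h1 : (c + c') % M = 0 := by
      rw [hcdef, hc'def, Nat.mod_add_mod, Nat.add_mod_mod]
      rw [show toN v + (M - toN u) + (toN u + (M - toN v)) = 2 * M from by omega]
      exact Nat.mul_mod_left 2 M
    exact dvd_bound_eq hMpos h1 (by omega) (by omega)
  have hc' : c' % 2^(h+2) = 2^h := by
    have hmod0 : (c' + c) % 2^(h+2) = 0 := by
      rw [show c' + c = M from by omega]
      exact hMmod
    have hexp : (c' % 2^(h+2) + 3 * 2^h) % 2^(h+2) = 0 := by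
      rw [← hc, ← Nat.add_mod]
      exact hmod0
    have hslt : c' % 2^(h+2) < 2^(h+2) := Nat.mod_lt _ h42pos
    have := dvd_bound_eq h42pos hexp (by omega) (by omega)
    omega
  refine ⟨(M - toN u) % M, Nat.mod_lt _ hMpos, ?_⟩
  set n₀ := (M - toN u) % M with hn₀def
  have hn₀lt : n₀ < M := Nat.mod_lt _ hMpos
  have hXn₀ : (toN u + n₀) % M = 0 := by
    rw [hn₀def, Nat.add_mod_mod]
    rw [show toN u + (M - toN u) = M from by omega]
    exact Nat.mod_self M
  have hYn₀ : (toN v + n₀) % M = c := by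
    rw [hn₀def, Nat.add_mod_mod, hcdef]
  have hQlt : c / 2^(h+2) < 2^k := by
    rw [Nat.div_lt_iff_lt_mul h42pos]
    calc c < M := hcM
    _ = 2^k * 2^(h+2) := by rw [hMdef, ← pow_add]; ring_nf
  set w : Fin k → Bool := fun i => (c / 2^(h+2)).testBit (i:ℕ) with hwdef
  have hwN : toN w = c / 2^(h+2) := by rw [hwdef, toN_fromN, Nat.mod_eq_of_lt hQlt]
  have hcw : toN (patW h k w) = c := by
    rw [toN_patW, hwN]
    have hdm := Nat.div_add_mod c (2^(h+2))
    rw [hc] at hdm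
    rw [h42] at hdm ⊢
    calc 2^h * (3 + 4 * (c / (4 * 2^h))) = 4 * 2^h * (c / (4 * 2^h)) + 3 * 2^h := by ring
    _ = c := hdm
  have hbound : ∀ n : ℕ, rhoW α (odoF^[n] u) (odoF^[n] v) ≤ (1-α) * phi α (k+h+2) c := by
    intro n
    have hX : toN (odoF^[n] u) = (toN u + n) % M := by rw [toN_iter, ← hMdef]
    have hY : toN (odoF^[n] v) = (toN v + n) % M := by rw [toN_iter, ← hMdef]
    have hXY : ((toN u + n) % M + c) % M = (toN v + n) % M :=
      add_mod_helper (toN u) (toN v) n c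
        (by rw [Nat.mod_eq_of_lt hcM]) (le_of_lt hx)
    have hYX : ((toN v + n) % M + c') % M = (toN u + n) % M :=
      add_mod_helper (toN v) (toN u) n c'
        (by rw [Nat.mod_eq_of_lt hc'M]) (le_of_lt hy)
    have s1 : phi α (k+h+2) ((toN v + n) % M) ≤ phi α (k+h+2) ((toN u + n) % M) + phi α (k+h+2) c := by
      rw [← hXY]
      have := phi_subadd hα0 hαh (k+h+2) ((toN u + n) % M) c
      rwa [← hMdef] at this
    have s2 : phi α (k+h+2) ((toN u + n) % M) ≤ phi α (k+h+2) ((toN v + n) % M) + phi α (k+h+2) c' := by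
      rw [← hYX]
      have := phi_subadd hα0 hαh (k+h+2) ((toN v + n) % M) c'
      rwa [← hMdef] at this
    have hcc' : phi α (k+h+2) c' ≤ phi α (k+h+2) c :=
      le_trans (phi_upper hα0 hαh h k c' hc') (phi_lower hα0 h k c hc)
    rw [rhoW, kfin_eq, kfin_eq, hX, hY]
    rw [← mul_sub, abs_mul, abs_of_pos (by linarith : (0:ℝ) < 1 - α)]
    apply mul_le_mul_of_nonneg_left _ (by linarith : (0:ℝ) ≤ 1 - α)
    rw [abs_sub_le_iff]
    constructor <;> linarith
  have hval : rhoW α (odoF^[n₀] u) (odoF^[n₀] v) = (1-α) * phi α (k+h+2) c := by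
    rw [rhoW, kfin_eq, kfin_eq, toN_iter, toN_iter, ← hMdef, hXn₀, hYn₀, phi_zero]
    rw [mul_zero, zero_sub, abs_neg, abs_mul,
      abs_of_pos (by linarith : (0:ℝ) < 1 - α),
      abs_of_nonneg (phi_nonneg hα0 _ _)]
  refine ⟨w, ?_, ?_, ?_⟩
  · left
    constructor
    · apply toN_inj
      rw [toN_iter, ← hMdef, hXn₀, toN_false]
    · apply toN_inj
      rw [toN_iter, ← hMdef, hYn₀, hcw]
  · have hsup : rhoInfW α u v = (1-α) * phi α (k+h+2) c := by
      apply le_antisymm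
      · exact ciSup_le hbound
      · rw [← hval]
        exact le_ciSup ⟨(1-α) * phi α (k+h+2) c, by rintro r ⟨n, rfl⟩; exact hbound n⟩ n₀
    rw [hsup, rhoW, kfin_eq, kfin_eq, toN_false, hcw, phi_zero]
    rw [mul_zero, zero_sub, abs_neg, abs_mul,
      abs_of_pos (by linarith : (0:ℝ) < 1 - α),
      abs_of_nonneg (phi_nonneg hα0 _ _)]
  · intro n' hn' w' hcase
    rcases hcase with ⟨h1, h2⟩ | ⟨h1, h2⟩
    · have e1 : (toN u + n') % M = 0 := by
        have := congrArg toN h1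
        rwa [toN_iter, ← hMdef, toN_false] at this
      have hmodeq : n' % M = n₀ % M :=
        Nat.ModEq.add_left_cancel' (toN u) (e1.trans hXn₀.symm)
      rwa [Nat.mod_eq_of_lt hn', Nat.mod_eq_of_lt hn₀lt] at hmodeq
    · have e1 : (toN v + n') % M = 0 := by
        have := congrArg toN h1
        rwa [toN_iter, ← hMdef, toN_false] at this
      have e2 : (toN u + n') % M = toN (patW h k w') := by
        have := congrArg toN h2
        rwa [toN_iter, ← hMdef] at this
      have e3 : (toN u + n') % M = c' := by
        have hhh := add_mod_helper (toN v) (toN u) n' c'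
          (by rw [Nat.mod_eq_of_lt hc'M]) (le_of_lt hy)
        rw [e1] at hhh
        rw [← hhh, zero_add, Nat.mod_eq_of_lt hc'M]
      have e5 : toN (patW h k w') = c' := e2.symm.trans e3
      have e4 : toN (patW h k w') % 2^(h+2) = 3 * 2^h := by
        rw [toN_patW, h42, mul_comm 4 ((2:ℕ)^h), Nat.mul_mod_mul_left]
        rw [Nat.add_mul_mod_self_left]
        norm_num
        ring
      exfalso
      rw [e5, hc'] at e4
      omega

lemma rhoInfW_comm (α : ℝ) {m : ℕ} (u v : Fin m → Bool) : rhoInfW α u v = rhoInfW α v u := by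
  unfold rhoInfW rhoW
  simp only [abs_sub_comm]

end S11

open S11 in
/-- If `u, v ∈ Σ^{k+h+2}` agree on the first `h` letters and differ at the `(h+1)`st, then
`ρ_∞(u,v) = ρ(0^{k+h+2}, 0^h 1 1 w)` where `n` (unique mod `2^{k+h+2}`) is the iterate at
which one of `u⊕n, v⊕n` equals `0^{k+h+2}` and the other equals `0^h 1 1 w`. -/
theorem stmt11 (α : ℝ) (hα1 : 0 < α) (hα2 : α < 1 / 2) (h k : ℕ) (hh : 0 < h) (hk : 0 < k)
    (u v : Fin (k + h + 2) → Bool)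
    (hpre : ∀ i : Fin (k + h + 2), (i : ℕ) < h → u i = v i)
    (hdiff : u ⟨h, by omega⟩ ≠ v ⟨h, by omega⟩) :
    ∃ n < 2 ^ (k + h + 2), ∃ w : Fin k → Bool,
      ((odoF^[n] u = (fun _ => false) ∧ odoF^[n] v = patW h k w) ∨
        (odoF^[n] v = (fun _ => false) ∧ odoF^[n] u = patW h k w)) ∧
      rhoInfW α u v = rhoW α (fun _ => false) (patW h k w) ∧
      ∀ n' < 2 ^ (k + h + 2), ∀ w' : Fin k → Bool,
        ((odoF^[n'] u = (fun _ => false) ∧ odoF^[n'] v = patW h k w') ∨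
          (odoF^[n'] v = (fun _ => false) ∧ odoF^[n'] u = patW h k w')) → n' = n := by
  set N := 2^(k+h+2) with hNdef
  have hNpos : 0 < N := by rw [hNdef]; positivity
  have hx : toN u < N := by rw [hNdef]; exact toN_lt u
  have hy : toN v < N := by rw [hNdef]; exact toN_lt v
  have htpos : (0:ℕ) < 2^h := by positivity
  have hPpos : (0:ℕ) < 2^(h+1) := by positivity
  have hDpos : (0:ℕ) < 2^(h+2) := by positivity
  have hPe : (2:ℕ)^(h+1) = 2 * 2^h := by rw [pow_succ]; ring
  have hDe : (2:ℕ)^(h+2) = 4 * 2^h := by rw [pow_add]; ring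
  have hPdvd : (2:ℕ)^(h+1) ∣ N := by rw [hNdef]; exact pow_dvd_pow 2 (by omega)
  have hDdvd : (2:ℕ)^(h+2) ∣ N := by rw [hNdef]; exact pow_dvd_pow 2 (by omega)
  set c : ℕ := (toN v + (N - toN u)) % N with hcdef
  set c' : ℕ := (toN u + (N - toN v)) % N with hc'def
  have hcN : c < N := Nat.mod_lt _ hNpos
  have hc'N : c' < N := Nat.mod_lt _ hNpos
  -- low bits agree
  have hlow : toN u % 2^h = toN v % 2^h := by
    apply Nat.eq_of_testBit_eq
    intro i
    rw [Nat.testBit_mod_two_pow, Nat.testBit_mod_two_pow]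
    by_cases hi : i < h
    · have e1 : (toN u).testBit i = u ⟨i, by omega⟩ := by
        simpa using testBit_toN u ⟨i, by omega⟩
      have e2 : (toN v).testBit i = v ⟨i, by omega⟩ := by
        simpa using testBit_toN v ⟨i, by omega⟩
      have e3 : u ⟨i, by omega⟩ = v ⟨i, by omega⟩ := hpre ⟨i, by omega⟩ hi
      simp [e1, e2, e3]
    · simp [hi]
  -- bit h differs
  have hbith : toN u / 2^h % 2 ≠ toN v / 2^h % 2 := by
    intro heq
    apply hdiff
    have e1 : (toN u).testBit h = u ⟨h, by omega⟩ := by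
      simpa using testBit_toN u ⟨h, by omega⟩
    have e2 : (toN v).testBit h = v ⟨h, by omega⟩ := by
      simpa using testBit_toN v ⟨h, by omega⟩
    have e3 : (toN u).testBit h = (toN v).testBit h := by
      rw [Nat.testBit_eq_decide_div_mod_eq, Nat.testBit_eq_decide_div_mod_eq, heq]
    exact e1.symm.trans (e3.trans e2)
  have hu1 : toN u % 2^(h+1) = toN u % 2^h + 2^h * (toN u / 2^h % 2) := by
    rw [pow_succ, Nat.mod_mul]
  have hv1 : toN v % 2^(h+1) = toN v % 2^h + 2^h * (toN v / 2^h % 2) := by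
    rw [pow_succ, Nat.mod_mul]
  have humod : toN u % 2^h < 2^h := Nat.mod_lt _ htpos
  have hvmod : toN v % 2^h < 2^h := Nat.mod_lt _ htpos
  -- c + x ≡ y
  have h0 : (c + toN u) % N = toN v % N := by
    rw [hcdef, Nat.mod_add_mod]
    rw [show toN v + (N - toN u) + toN u = toN v + N from by omega]
    rw [Nat.add_mod_right]
  have h1 : (c + toN u) % 2^(h+1) = toN v % 2^(h+1) := Nat.ModEq.of_dvd hPdvd h0
  -- the key congruence: c % 2^(h+1) = 2^h
  have hgoal : (2^h + toN u) % 2^(h+1) = toN v % 2^(h+1) := by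
    rcases Nat.mod_two_eq_zero_or_one (toN u / 2^h) with hbu | hbu <;>
      rcases Nat.mod_two_eq_zero_or_one (toN v / 2^h) with hbv | hbv
    · exact absurd (hbu.trans hbv.symm) hbith
    · have ha : toN u % 2^(h+1) = toN u % 2^h := by rw [hu1, hbu]; ring
      have hb : toN v % 2^(h+1) = toN v % 2^h + 2^h := by rw [hv1, hbv]; ring
      rw [← Nat.add_mod_mod, ha, Nat.mod_eq_of_lt (by omega), hb, hlow]
      omega
    · have ha : toN u % 2^(h+1) = toN u % 2^h + 2^h := by rw [hu1, hbu]; ring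
      have hb : toN v % 2^(h+1) = toN v % 2^h := by rw [hv1, hbv]; ring
      rw [← Nat.add_mod_mod, ha]
      rw [show 2^h + (toN u % 2^h + 2^h) = toN u % 2^h + 2^(h+1) from by omega]
      rw [Nat.add_mod_right, hb, hlow]
      rw [Nat.mod_eq_of_lt (by omega)]
    · exact absurd (hbu.trans hbv.symm) hbith
  have hcr : c % 2^(h+1) = 2^h := by
    apply modcancel (Nat.mod_lt _ hPpos) (by omega) (d := 2^h) (a := toN u)
    rw [Nat.mod_add_mod, h1, hgoal]
  have hcpos : 0 < c := by
    rcases Nat.eq_zero_or_pos c with hzero | hp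
    · rw [hzero, Nat.zero_mod] at hcr; omega
    · exact hp
  -- c % 2^(h+2) is 2^h or 3*2^h
  have hr2 : c % 2^(h+2) = 2^h ∨ c % 2^(h+2) = 3 * 2^h := by
    have hdd : (2:ℕ)^(h+1) ∣ 2^(h+2) := pow_dvd_pow 2 (by omega)
    have e1 : (c % 2^(h+2)) % 2^(h+1) = 2^h := by rw [Nat.mod_mod_of_dvd _ hdd, hcr]
    have e2 : c % 2^(h+2) < 2^(h+2) := Nat.mod_lt _ hDpos
    have e3 := Nat.div_add_mod (c % 2^(h+2)) (2^(h+1))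
    rw [e1] at e3
    have e4 : (c % 2^(h+2)) / 2^(h+1) < 2 := by
      rw [Nat.div_lt_iff_lt_mul hPpos]
      calc c % 2^(h+2) < 2^(h+2) := e2
      _ = 2 * 2^(h+1) := by rw [pow_succ]; ring
    have hsplit : (c % 2^(h+2)) / 2^(h+1) = 0 ∨ (c % 2^(h+2)) / 2^(h+1) = 1 :=
      Nat.le_one_iff_eq_zero_or_eq_one.mp (Nat.lt_succ_iff.mp e4)
    rcases hsplit with h5 | h5 <;> rw [h5] at e3
    · left; omega
    · right; omega
  rcases hr2 with hcase | hcase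
  · -- swapped case: c' % 2^(h+2) = 3 * 2^h
    have hNmod : N % 2^(h+2) = 0 := by
      obtain ⟨q, hq⟩ := hDdvd
      rw [hq]; exact Nat.mul_mod_right _ _
    have hsum : c + c' = N := by
      have hs1 : (c + c') % N = 0 := by
        rw [hcdef, hc'def, Nat.mod_add_mod, Nat.add_mod_mod]
        rw [show toN v + (N - toN u) + (toN u + (N - toN v)) = 2 * N from by omega]
        exact Nat.mul_mod_left 2 N
      exact dvd_bound_eq hNpos hs1 (by omega) (by omega)
    have hc'case : c' % 2^(h+2) = 3 * 2^h := by
      have hm0 : (c' + c) % 2^(h+2) = 0 := by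
        rw [show c' + c = N from by omega]
        exact hNmod
      have hexp : (c' % 2^(h+2) + 2^h) % 2^(h+2) = 0 := by
        rw [← hcase, ← Nat.add_mod]
        exact hm0
      have hslt : c' % 2^(h+2) < 2^(h+2) := Nat.mod_lt _ hDpos
      have := dvd_bound_eq hDpos hexp (by omega) (by omega)
      omega
    have haux := aux α hα1 hα2 h k hh hk v u hc'case
    obtain ⟨n, hn, w, hor, hrho, huniq⟩ := haux
    refine ⟨n, hn, w, hor.symm, ?_, ?_⟩
    · rw [rhoInfW_comm]; exact hrho
    · intro n' hn' w' hc2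
      exact huniq n' hn' w' hc2.symm
  · exact aux α hα1 hα2 h k hh hk u v hcase
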